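/- Let p ≥ 5 be a prime. The system of equations -n² + nm - m² - m = 1, -k² + kl - l² = 1, and k(m-2n) + l(n-2m-1) = -1 in ℤ/p (the compatibility system for realizing the Dynkin diagram A₄ over (ℤ/p)²) has a solution if and only if 5 is a square modulo p. -/
import Mathlib


/-- For a prime `p ≥ 5`, the compatibility system for realizing the Dynkin
diagram `A₄` over `(ℤ/p)²` has a solution in `ℤ/p` if and only if `5` is a
square modulo `p`. -/
theorem stmt_7 (p : ℕ) [Fact p.Prime] (hp : 5 ≤ p) :
    (∃ n m k l : ZMod p,
      -n ^ 2 + n * m - m ^ 2 - m = 1 ∧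
      -k ^ 2 + k * l - l ^ 2 = 1 ∧
      k * (m - 2 * n) + l * (n - 2 * m - 1) = -1) ↔
    IsSquare (5 : ZMod p) := by
  have hprime : p.Prime := Fact.out
  have hnd : ∀ c : ℕ, 0 < c → c < 5 → (c : ZMod p) ≠ 0 := by
    intro c hc1 hc2 hc
    rw [ZMod.natCast_eq_zero_iff] at hc
    have := Nat.le_of_dvd hc1 hc
    omega
  have h2 : (2 : ZMod p) ≠ 0 := by
    have := hnd 2 (by norm_num) (by norm_num); simpa using this
  have h3 : (3 : ZMod p) ≠ 0 := by
    have := hnd 3 (by norm_num) (by norm_num); simpa using this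
  have h4 : (4 : ZMod p) ≠ 0 := by
    have : (4 : ZMod p) = 2 ^ 2 := by norm_num
    rw [this]; exact pow_ne_zero _ h2
  have h6 : (6 : ZMod p) ≠ 0 := by
    have : (6 : ZMod p) = 2 * 3 := by norm_num
    rw [this]; exact mul_ne_zero h2 h3
  have h12 : (12 : ZMod p) ≠ 0 := by
    have : (12 : ZMod p) = 2 * 6 := by norm_num
    rw [this]; exact mul_ne_zero h2 h6
  have h16 : (16 : ZMod p) ≠ 0 := by
    have : (16 : ZMod p) = 4 * 4 := by norm_num
    rw [this]; exact mul_ne_zero h4 h4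
  constructor
  · rintro ⟨n, m, k, l, h1, hq2, hq3⟩
    by_cases hA : m - 2 * n = 0
    · refine ⟨(n - 2 * m - 1) * (2 * k - l), ?_⟩
      linear_combination (-12 : ZMod p) * h1 + 4 * (n - 2 * m - 1) ^ 2 * hq2 +
        3 * ((k * (m - 2 * n) + l * (n - 2 * m - 1) + 1) - 2) * hq3 +
        (4 * (3 * n + (m - 2 * n) + 1) -
          6 * ((k * (m - 2 * n) + l * (n - 2 * m - 1) + 1) - 1) * k +
          3 * k ^ 2 * (m - 2 * n)) * hA
    · refine ⟨(4 * l + 3 * m + 2) * (m - 2 * n)⁻¹, ?_⟩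
      have key : (4 * l + 3 * m + 2) ^ 2 = 5 * (m - 2 * n) ^ 2 := by
        linear_combination (-24 * l ^ 2 - 12 : ZMod p) * h1 + 8 * (m - 2 * n) ^ 2 * hq2 +
          8 * (k * (m - 2 * n) - 1 - (n - 2 * m - 1) * l - l * (m - 2 * n)) * hq3
      field_simp
      linear_combination -key
  · rintro ⟨s, hs⟩
    -- first get a point on the auxiliary conic X² + 8 + 3Y² = 0
    obtain ⟨a, b, hab⟩ := FiniteField.exists_root_sum_quadratic
      (f := (Polynomial.X ^ 2 + Polynomial.C (8 : ZMod p)))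
      (g := (Polynomial.C (3 : ZMod p) * Polynomial.X ^ 2))
      (Polynomial.degree_X_pow_add_C (by norm_num) 8)
      (Polynomial.degree_C_mul_X_pow 2 h3)
      (by
        rw [ZMod.card]
        rcases hprime.eq_two_or_odd' with h | h
        · omega
        · exact Nat.odd_iff.mp h)
    simp only [Polynomial.eval_add, Polynomial.eval_mul, Polynomial.eval_pow,
      Polynomial.eval_X, Polynomial.eval_C] at hab
    -- build a solution (nz, mz) of the first equation
    set mz : ZMod p := (a - 2) * (3 : ZMod p)⁻¹ with hmz
    set nz : ZMod p := (b + mz) * (2 : ZMod p)⁻¹ with hnz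
    have h3m : 3 * mz = a - 2 := by
      rw [hmz, mul_comm, mul_assoc, inv_mul_cancel₀ h3, mul_one]
    have h2n : 2 * nz = b + mz := by
      rw [hnz, mul_comm, mul_assoc, inv_mul_cancel₀ h2, mul_one]
    have h1z : -nz ^ 2 + nz * mz - mz ^ 2 - mz = 1 := by
      have h12e : (12 : ZMod p) * (-nz ^ 2 + nz * mz - mz ^ 2 - mz) = 12 * 1 := by
        linear_combination (-(3 * mz + 2 + a)) * h3m + (-3 * (2 * nz - mz + b)) * h2n - hab
      exact mul_left_cancel₀ h12 h12e
    -- arrange that m - 2n ≠ 0 (using the symmetry m ↦ n - 1 - m)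
    obtain ⟨n, m, h1, hA⟩ : ∃ n m : ZMod p,
        (-n ^ 2 + n * m - m ^ 2 - m = 1) ∧ m - 2 * n ≠ 0 := by
      by_cases hA0 : mz - 2 * nz = 0
      · refine ⟨nz, nz - 1 - mz, by linear_combination h1z, ?_⟩
        intro hA1
        have h60 : (6 : ZMod p) = 0 := by
          linear_combination (-9 : ZMod p) * h1z +
            (9 * (-3 * nz - (mz - 2 * nz) - 1) + 3 * (3 * nz + 1)) * hA0 +
            (3 * (3 * nz + 1)) * hA1
        exact h6 h60
      · exact ⟨nz, mz, h1z, hA0⟩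
    -- now construct k and l explicitly
    set A : ZMod p := m - 2 * n with hAdef
    set B : ZMod p := n - 2 * m - 1 with hBdef
    set l : ZMod p := (-(3 * m + 2) - s * A) * (4 : ZMod p)⁻¹ with hl
    set k : ZMod p := (-1 - B * l) * A⁻¹ with hk
    have h4l : 4 * l = -(3 * m + 2) - s * A := by
      rw [hl, mul_comm, mul_assoc, inv_mul_cancel₀ h4, mul_one]
    have hkA : k * A = -1 - B * l := by
      rw [hk, mul_assoc, inv_mul_cancel₀ hA, mul_one]
    refine ⟨n, m, k, l, h1, ?_, ?_⟩
    · have h16A : (16 : ZMod p) * A ^ 2 ≠ 0 :=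
        mul_ne_zero h16 (pow_ne_zero _ hA)
      have key : (16 : ZMod p) * A ^ 2 * (-k ^ 2 + k * l - l ^ 2) = 16 * A ^ 2 * 1 := by
        linear_combination (-16 * (k * A - 1 - B * l - l * A)) * hkA +
          (48 * l ^ 2 + 24 : ZMod p) * h1 +
          (2 * (4 * l + 3 * m + 2 + s * A) - 4 * s * A) * h4l + (-2 * A ^ 2) * hs
      exact mul_left_cancel₀ h16A key
    · linear_combination hkA
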